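/- Let n ≥ 1 and define A : ℝⁿ → ℝⁿ by A(ξ) = a(|ξ|)·ξ for ξ ≠ 0 and A(0) = 0. Then A is continuous on ℝⁿ and strictly monotone: (A(ξ) − A(η)) · (ξ − η) > 0 for all ξ, η ∈ ℝⁿ with ξ ≠ η. -/

import Mathlib

open Topology Filter


/-- strict monotonicity of the stress field, Step 3 of the proof of
Theorem 1.1. The vector field `A(ξ) = a(|ξ|)ξ` (with `A(0)=0`) is continuous on `ℝⁿ`
and strictly monotone: `(A(ξ)−A(η))·(ξ−η) > 0` whenever `ξ ≠ η`. -/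
theorem stmt_11 (a a' : ℝ → ℝ) (iA sA : ℝ)
    (hiA : -1 < iA) (hias : iA ≤ sA)
    (ha_pos : ∀ t, 0 < t → 0 < a t)
    (ha_deriv : ∀ t, 0 < t → HasDerivAt a (a' t) t)
    (ha'_cont : ContinuousOn a' (Set.Ioi 0))
    (hbound : ∀ t, 0 < t → iA ≤ t * a' t / a t ∧ t * a' t / a t ≤ sA)
    (n : ℕ) (hn : 1 ≤ n)
    (A : EuclideanSpace ℝ (Fin n) → EuclideanSpace ℝ (Fin n))
    (hA0 : A 0 = 0)
    (hA : ∀ ξ : EuclideanSpace ℝ (Fin n), ξ ≠ 0 → A ξ = a ‖ξ‖ • ξ) :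
    Continuous A ∧
    ∀ ξ η : EuclideanSpace ℝ (Fin n), ξ ≠ η →
      (0 : ℝ) < inner ℝ (A ξ - A η) (ξ - η) := by
  -- basic facts
  have hkey : ∀ t : ℝ, 0 < t → iA * a t ≤ t * a' t := by
    intro t ht
    have h := (hbound t ht).1
    have := (le_div_iff₀ (ha_pos t ht)).mp h
    linarith
  -- φ(t) = t * a t is strictly monotone on (0,∞)
  have hφderiv : ∀ t : ℝ, 0 < t → HasDerivAt (fun s => s * a s) (a t + t * a' t) t := by
    intro t ht
    have := (hasDerivAt_id' t).fun_mul (ha_deriv t ht)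
    simpa [one_mul] using this
  have hφpos : ∀ t : ℝ, 0 < t → 0 < a t + t * a' t := by
    intro t ht
    have h1 := hkey t ht
    have h2 := ha_pos t ht
    nlinarith
  have hφmono : StrictMonoOn (fun s => s * a s) (Set.Ioi 0) := by
    apply strictMonoOn_of_deriv_pos (convex_Ioi 0)
    · intro t ht
      exact ((hφderiv t ht).continuousAt).continuousWithinAt
    · intro t ht
      rw [interior_Ioi] at ht
      rw [(hφderiv t ht).deriv]
      exact hφpos t ht
  -- ψ(t) = a t * t ^ (-iA) is monotone on (0,∞)
  have hψderiv : ∀ t : ℝ, 0 < t →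
      HasDerivAt (fun s => a s * s ^ (-iA)) (a' t * t ^ (-iA) + a t * (-iA * t ^ (-iA - 1))) t := by
    intro t ht
    exact (ha_deriv t ht).mul (Real.hasDerivAt_rpow_const (Or.inl ht.ne'))
  have hψnonneg : ∀ t : ℝ, 0 < t → 0 ≤ a' t * t ^ (-iA) + a t * (-iA * t ^ (-iA - 1)) := by
    intro t ht
    have h1 : t ^ (-iA) = t * t ^ (-iA - 1) := by
      rw [Real.rpow_sub ht, Real.rpow_one]
      field_simp
    have h2 : (0:ℝ) < t ^ (-iA - 1) := Real.rpow_pos_of_pos ht _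
    have h3 := hkey t ht
    calc (0:ℝ) ≤ (t * a' t - iA * a t) * t ^ (-iA - 1) := by
          apply mul_nonneg _ h2.le; linarith
      _ = a' t * t ^ (-iA) + a t * (-iA * t ^ (-iA - 1)) := by rw [h1]; ring
  have hψmono : MonotoneOn (fun s => a s * s ^ (-iA)) (Set.Ioi 0) := by
    apply monotoneOn_of_deriv_nonneg (convex_Ioi 0)
    · intro t ht
      exact ((hψderiv t ht).continuousAt).continuousWithinAt
    · intro t ht
      rw [interior_Ioi] at ht
      exact (hψderiv t ht).differentiableAt.differentiableWithinAt
    · intro t ht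
      rw [interior_Ioi] at ht
      rw [(hψderiv t ht).deriv]
      exact hψnonneg t ht
  -- bound near zero : a t * t ≤ a 1 * t ^ (1 + iA) for 0 < t ≤ 1
  have hsmall : ∀ t : ℝ, 0 < t → t ≤ 1 → a t * t ≤ a 1 * t ^ (1 + iA) := by
    intro t ht ht1
    have h1 : a t * t ^ (-iA) ≤ a 1 * (1:ℝ) ^ (-iA) :=
      hψmono (Set.mem_Ioi.mpr ht) (Set.mem_Ioi.mpr one_pos) ht1
    rw [Real.one_rpow, mul_one] at h1
    have h2 : (0:ℝ) < t ^ iA := Real.rpow_pos_of_pos ht _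
    have h3 : a t * t ^ (-iA) * t ^ iA ≤ a 1 * t ^ iA :=
      mul_le_mul_of_nonneg_right h1 h2.le
    have h4 : t ^ (-iA) * t ^ iA = 1 := by
      rw [← Real.rpow_add ht]; simp
    have h5 : a t ≤ a 1 * t ^ iA := by
      calc a t = a t * (t ^ (-iA) * t ^ iA) := by rw [h4, mul_one]
        _ = a t * t ^ (-iA) * t ^ iA := by ring
        _ ≤ a 1 * t ^ iA := h3
    calc a t * t ≤ a 1 * t ^ iA * t := mul_le_mul_of_nonneg_right h5 ht.le
      _ = a 1 * t ^ (1 + iA) := by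
          rw [add_comm, Real.rpow_add_one ht.ne']; ring
  constructor
  · -- continuity
    rw [continuous_iff_continuousAt]
    intro ξ
    by_cases hξ : ξ = 0
    · subst hξ
      rw [ContinuousAt, hA0]
      refine squeeze_zero_norm' (a := fun x => a 1 * ‖x‖ ^ (1 + iA)) ?_ ?_
      · have hball : ∀ᶠ x : EuclideanSpace ℝ (Fin n) in 𝓝 0, ‖x‖ ≤ 1 := by
          have := Metric.closedBall_mem_nhds (0 : EuclideanSpace ℝ (Fin n)) one_pos
          filter_upwards [this] with x hx
          simpa [Metric.mem_closedBall, dist_zero_right] using hx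
        filter_upwards [hball] with x hx
        by_cases hx0 : x = 0
        · subst hx0
          rw [hA0, norm_zero,
            Real.zero_rpow (ne_of_gt (by linarith : (0:ℝ) < 1 + iA)), mul_zero]
        · rw [hA x hx0, norm_smul]
          have hxpos : 0 < ‖x‖ := norm_pos_iff.mpr hx0
          rw [Real.norm_eq_abs, abs_of_pos (ha_pos _ hxpos)]
          exact hsmall ‖x‖ hxpos hx
      · have h1 : (0:ℝ) < 1 + iA := by linarith
        have hc : ContinuousAt (fun s : ℝ => a 1 * s ^ (1 + iA)) 0 :=
          (Real.continuousAt_rpow_const 0 (1 + iA) (Or.inr h1.le)).const_mul (a 1)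
        have hn0 : Filter.Tendsto (fun x : EuclideanSpace ℝ (Fin n) => ‖x‖) (𝓝 0) (𝓝 0) := by
          simpa using (continuous_norm (E := EuclideanSpace ℝ (Fin n))).tendsto 0
        have := hc.tendsto.comp hn0
        simpa [Function.comp_def, Real.zero_rpow (ne_of_gt h1)] using this
    · have hxpos : 0 < ‖ξ‖ := norm_pos_iff.mpr hξ
      have heq : ∀ᶠ x : EuclideanSpace ℝ (Fin n) in 𝓝 ξ, A x = a ‖x‖ • x := by
        have hopen : IsOpen {x : EuclideanSpace ℝ (Fin n) | x ≠ 0} :=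
          isOpen_ne
        filter_upwards [hopen.mem_nhds hξ] with x hx
        exact hA x hx
      have hcont : ContinuousAt (fun x : EuclideanSpace ℝ (Fin n) => a ‖x‖ • x) ξ := by
        apply ContinuousAt.fun_smul
        · exact ((ha_deriv ‖ξ‖ hxpos).continuousAt).comp continuous_norm.continuousAt
        · exact continuousAt_id
      exact hcont.congr (heq.mono fun x hx => hx.symm)
  · -- strict monotonicity
    intro ξ η hne
    by_cases hξ : ξ = 0
    · subst hξ
      have hη : η ≠ 0 := fun h => hne h.symm
      have hηpos : 0 < ‖η‖ := norm_pos_iff.mpr hη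
      rw [hA0, hA η hη]
      have : (inner ℝ (0 - a ‖η‖ • η) (0 - η) : ℝ) = a ‖η‖ * ‖η‖ ^ 2 := by
        rw [zero_sub, zero_sub, inner_neg_neg, real_inner_smul_left,
          real_inner_self_eq_norm_sq]
      rw [this]
      exact mul_pos (ha_pos _ hηpos) (by positivity)
    · by_cases hη : η = 0
      · subst hη
        have hξpos : 0 < ‖ξ‖ := norm_pos_iff.mpr hξ
        rw [hA0, hA ξ hξ]
        have : (inner ℝ (a ‖ξ‖ • ξ - 0) (ξ - 0) : ℝ) = a ‖ξ‖ * ‖ξ‖ ^ 2 := by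
          rw [sub_zero, sub_zero, real_inner_smul_left, real_inner_self_eq_norm_sq]
        rw [this]
        exact mul_pos (ha_pos _ hξpos) (by positivity)
      · set s := ‖ξ‖ with hs
        set t := ‖η‖ with ht
        have hspos : 0 < s := norm_pos_iff.mpr hξ
        have htpos : 0 < t := norm_pos_iff.mpr hη
        set p : ℝ := inner ℝ ξ η with hp
        have hexp : (inner ℝ (A ξ - A η) (ξ - η) : ℝ)
            = (s * a s - t * a t) * (s - t) + (a s + a t) * (s * t - p) := by
          rw [hA ξ hξ, hA η hη]
          rw [inner_sub_left, inner_sub_right, inner_sub_right,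
            real_inner_smul_left, real_inner_smul_left, real_inner_smul_left,
            real_inner_smul_left, real_inner_self_eq_norm_sq, real_inner_self_eq_norm_sq,
            real_inner_comm ξ η]
          rw [← hs, ← ht, ← hp]
          ring
        have hCS : p ≤ s * t := real_inner_le_norm ξ η
        have hdiff : 0 < ‖ξ - η‖ ^ 2 := by
          have h0 : ξ - η ≠ 0 := sub_ne_zero.mpr hne
          exact pow_pos (norm_pos_iff.mpr h0) 2
        have hnormsub : ‖ξ - η‖ ^ 2 = s ^ 2 - 2 * p + t ^ 2 := by
          rw [norm_sub_sq_real, ← hs, ← ht, ← hp]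
        rw [hexp]
        have hsum : 0 < a s + a t := by
          have := ha_pos s hspos; have := ha_pos t htpos; linarith
        rcases eq_or_ne s t with hst | hst
        · have hpt : p < s * t := by
            rw [hnormsub] at hdiff
            nlinarith [hdiff]
          have h1 : (s * a s - t * a t) * (s - t) = 0 := by rw [hst]; ring
          rw [h1, zero_add]
          exact mul_pos hsum (by linarith)
        · have h1 : 0 < (s * a s - t * a t) * (s - t) := by
            rcases lt_or_gt_of_ne hst with h | h
            · have := hφmono (Set.mem_Ioi.mpr hspos) (Set.mem_Ioi.mpr htpos) h
              simp only at this
              nlinarith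
            · have := hφmono (Set.mem_Ioi.mpr htpos) (Set.mem_Ioi.mpr hspos) h
              simp only at this
              nlinarith
          have h2 : 0 ≤ (a s + a t) * (s * t - p) := by
            apply mul_nonneg hsum.le; linarith
          linarith
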